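/- A hypergraph H = (V,E) is db-rootable in an edge e ∈ E if and only if for every connected component C = (V_C, E_C) of H \ e, the hypergraph (V_C ∪ e, E_C ∪ {e}) is db-rootable in e. -/

import Mathlib

variable {V : Type} [DecidableEq V]

/-- A join tree of a hypergraph with edge set `E`: a tree on node set `E` such that
for every vertex `v`, the edges containing `v` induce a connected subtree. -/
structure JoinTreeOf (E : Finset (Finset V)) where
  T : SimpleGraph {f // f ∈ E}
  isTree : T.IsTree
  conn : ∀ v : V, (T.induce {f : {f // f ∈ E} | v ∈ f.1}).Preconnected

/-- `x` lies on the (unique) path from `r` to `y` in `G`. -/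
def onTreePath {α : Type} (G : SimpleGraph α) (r y x : α) : Prop :=
  ∀ p : G.Walk r y, p.IsPath → x ∈ p.support

/-- A disjoint branches decomposition of the hypergraph with edge set `E`, rooted at `root`:
a join tree rooted at `root` in which any two edges on different branches
(neither an ancestor of the other) are disjoint. -/
structure DBD (E : Finset (Finset V)) (root : Finset V) where
  J : JoinTreeOf E
  rootMem : root ∈ E
  disj : ∀ a b : {f // f ∈ E}, a ≠ b →
    ¬ onTreePath J.T ⟨root, rootMem⟩ b a →
    ¬ onTreePath J.T ⟨root, rootMem⟩ a b →
    a.1 ∩ b.1 = ∅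

/-- `H` is db-rootable in `e`. -/
def DbRootable (E : Finset (Finset V)) (e : Finset V) : Prop := Nonempty (DBD E e)

/-- Two hyperedges are linked by a path of pairwise-intersecting edges of `E`. -/
def edgeLinked (E : Finset (Finset V)) (a b : Finset V) : Prop :=
  Relation.ReflTransGen (fun x y => x ∈ E ∧ y ∈ E ∧ (x ∩ y).Nonempty) a b

open Classical in
/-- The connected component (as a set of edges) of the edge `e` in the hypergraph `E`. -/
noncomputable def component (E : Finset (Finset V)) (e : Finset V) : Finset (Finset V) :=
  E.filter (edgeLinked E e)

/-- `C` is (the edge set of) a connected component of the hypergraph with edge set `E`. -/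
def IsComponent (E C : Finset (Finset V)) : Prop := ∃ e ∈ E, C = component E e

/-- The hypergraph with edge set `E` is connected. -/
def HGConnected (E : Finset (Finset V)) : Prop := ∀ a ∈ E, ∀ b ∈ E, edgeLinked E a b

/-- Vertices `u` and `w` are connected by a path of edges in `E`. -/
def vtxLinked (E : Finset (Finset V)) (u w : V) : Prop :=
  Relation.ReflTransGen (fun x y => ∃ f ∈ E, x ∈ f ∧ y ∈ f) u w

/-- The hypergraph has a join path: a join tree whose underlying tree is a path
(every node has at most two neighbours). -/
def HasJoinPath (E : Finset (Finset V)) : Prop :=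
  ∃ J : JoinTreeOf E, ∀ f : {f // f ∈ E}, (J.T.neighborSet f).ncard ≤ 2

open SimpleGraph

set_option linter.unusedSectionVars false
set_option linter.unusedVariables false

namespace TreeTool

variable {α : Type} [DecidableEq α] {G : SimpleGraph α}

noncomputable def pth (hT : G.IsTree) (x y : α) : G.Walk x y :=
  (hT.existsUnique_path x y).choose

lemma pth_isPath (hT : G.IsTree) (x y : α) : (pth hT x y).IsPath :=
  (hT.existsUnique_path x y).choose_spec.1

lemma pth_unique (hT : G.IsTree) {x y : α} {p : G.Walk x y} (hp : p.IsPath) :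
    p = pth hT x y :=
  (hT.existsUnique_path x y).choose_spec.2 p hp

lemma onTreePath_iff (hT : G.IsTree) (r y x : α) :
    onTreePath G r y x ↔ x ∈ (pth hT r y).support := by
  constructor
  · intro h; exact h _ (pth_isPath hT r y)
  · intro h p hp; rwa [pth_unique hT hp]

/-- `x` is an ancestor of `y` (lies on the path from the root `r` to `y`). -/
def anc (hT : G.IsTree) (r x y : α) : Prop := x ∈ (pth hT r y).support

lemma anc_refl (hT : G.IsTree) (r x : α) : anc hT r x x := Walk.end_mem_support _

lemma anc_root (hT : G.IsTree) (r x : α) : anc hT r r x := Walk.start_mem_support _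

lemma pth_rr (hT : G.IsTree) (r : α) : pth hT r r = Walk.nil :=
  (pth_unique hT (Walk.IsPath.nil)).symm

lemma anc_to_root (hT : G.IsTree) {r x : α} (h : anc hT r x r) : x = r := by
  unfold anc at h
  rw [pth_rr hT] at h
  simpa using h

lemma pth_takeUntil (hT : G.IsTree) {r x y : α} (h : anc hT r x y) :
    (pth hT r y).takeUntil x h = pth hT r x :=
  pth_unique hT ((pth_isPath hT r y).takeUntil h)

lemma anc_trans (hT : G.IsTree) {r x y z : α} (hxy : anc hT r x y) (hyz : anc hT r y z) :
    anc hT r x z := by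
  unfold anc at hxy ⊢
  rw [← pth_takeUntil hT hyz] at hxy
  exact Walk.support_takeUntil_subset _ _ hxy

/-- Depth of a node below the root. -/
noncomputable def depth (hT : G.IsTree) (r x : α) : ℕ := (pth hT r x).length

lemma depth_le_of_anc (hT : G.IsTree) {r x y : α} (h : anc hT r x y) :
    depth hT r x ≤ depth hT r y := by
  unfold depth
  rw [← pth_takeUntil hT h]
  exact Walk.length_takeUntil_le _ _

lemma depth_lt_of_anc (hT : G.IsTree) {r x y : α} (h : anc hT r x y) (hne : x ≠ y) :
    depth hT r x < depth hT r y := by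
  have hs := ((pth hT r y).take_spec h).symm
  have hlen := congrArg Walk.length hs
  rw [Walk.length_append, pth_takeUntil hT h] at hlen
  have hpos : 0 < ((pth hT r y).dropUntil x h).length := by
    rcases Nat.eq_zero_or_pos ((pth hT r y).dropUntil x h).length with h0 | h0
    · exact absurd (Walk.eq_of_length_eq_zero h0) hne
    · exact h0
  unfold depth
  omega

lemma anc_antisymm (hT : G.IsTree) {r x y : α} (h1 : anc hT r x y) (h2 : anc hT r y x) :
    x = y := by
  by_contra hne
  have := depth_lt_of_anc hT h1 hne
  have := depth_lt_of_anc hT h2 (Ne.symm hne)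
  omega

lemma anc_of_anc_anc_le (hT : G.IsTree) {r x y b : α} (hx : anc hT r x b) (hy : anc hT r y b)
    (hd : depth hT r x ≤ depth hT r y) : anc hT r x y := by
  have hyx : anc hT r y x → x = y := by
    intro h
    by_contra hne
    have := depth_lt_of_anc hT h (Ne.symm hne)
    omega
  unfold anc at hx
  rw [← (pth hT r b).take_spec hy, Walk.mem_support_append_iff] at hx
  rcases hx with hx | hx
  · rwa [pth_takeUntil hT hy] at hx
  · -- x is in the part after y; show y is an ancestor of x, forcing x = y
    set d := (pth hT r b).dropUntil y hy with hd'
    have hw : ((pth hT r y).append (d.takeUntil x hx)).IsPath := by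
      rw [Walk.isPath_def, Walk.support_append]
      have hnodup : ((pth hT r b).support).Nodup := (pth_isPath hT r b).support_nodup
      rw [← (pth hT r b).take_spec hy, Walk.support_append, pth_takeUntil hT hy] at hnodup
      have hdd : d.support.tail = (d.takeUntil x hx).support.tail
          ++ (d.dropUntil x hx).support.tail := by
        conv_lhs => rw [← d.take_spec hx]
        rw [Walk.support_append, List.tail_append_of_ne_nil (Walk.support_ne_nil _)]
      rw [hdd, ← List.append_assoc] at hnodup
      exact hnodup.of_append_left
    have heq := pth_unique hT hw
    have hyin : y ∈ (pth hT r x).support := by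
      rw [← heq, Walk.mem_support_append_iff]
      exact Or.inl (Walk.end_mem_support _)
    have := hyx hyin
    subst this
    exact anc_refl hT r x



lemma exists_parent (hT : G.IsTree) (r : α) {x : α} (hx : x ≠ r) :
    ∃ y, ∃ h : G.Adj y x, pth hT r x = (pth hT r y).concat h := by
  obtain ⟨w, hadj, p', hrev⟩ := Walk.exists_eq_cons_of_ne hx (pth hT r x).reverse
  have hx' : pth hT r x = p'.reverse.concat hadj.symm := by
    have := congrArg Walk.reverse hrev
    rwa [Walk.reverse_reverse, Walk.reverse_cons] at this
  have hq : p'.reverse.IsPath := by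
    rw [Walk.isPath_def]
    have := (pth_isPath hT r x).support_nodup
    rw [hx', Walk.support_concat] at this
    exact this.of_append_left
  refine ⟨w, hadj.symm, ?_⟩
  rwa [pth_unique hT hq] at hx'

open Classical in
/-- The parent of `x` in the tree rooted at `r`. -/
noncomputable def par (hT : G.IsTree) (r x : α) : α :=
  if hx : x = r then r else (exists_parent hT r hx).choose

lemma par_root (hT : G.IsTree) (r : α) : par hT r r = r := dif_pos rfl

lemma par_spec (hT : G.IsTree) {r x : α} (hx : x ≠ r) :
    ∃ h : G.Adj (par hT r x) x, pth hT r x = (pth hT r (par hT r x)).concat h := by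
  rw [par, dif_neg hx]
  exact (exists_parent hT r hx).choose_spec

lemma adj_par (hT : G.IsTree) {r x : α} (hx : x ≠ r) : G.Adj (par hT r x) x :=
  (par_spec hT hx).choose

lemma depth_par (hT : G.IsTree) {r x : α} (hx : x ≠ r) :
    depth hT r (par hT r x) + 1 = depth hT r x := by
  obtain ⟨h, hs⟩ := par_spec hT hx
  have := congrArg Walk.length hs
  rw [Walk.length_concat] at this
  unfold depth
  omega

lemma anc_par (hT : G.IsTree) {r x : α} (hx : x ≠ r) : anc hT r (par hT r x) x := by
  obtain ⟨h, hs⟩ := par_spec hT hx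
  unfold anc
  rw [hs, Walk.support_concat]
  exact List.mem_append_left _ (Walk.end_mem_support _)

lemma par_eq_of (hT : G.IsTree) {r x y : α} (hx : x ≠ r) (hy : anc hT r y x)
    (hd : depth hT r y + 1 = depth hT r x) : y = par hT r x := by
  have h1 : anc hT r y (par hT r x) := by
    refine anc_of_anc_anc_le hT hy (anc_par hT hx) ?_
    have := depth_par hT hx
    omega
  by_contra hne
  have := depth_lt_of_anc hT h1 hne
  have := depth_par hT hx
  omega

lemma depth_pos (hT : G.IsTree) {r x : α} (hx : x ≠ r) : 0 < depth hT r x := by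
  rcases Nat.eq_zero_or_pos (depth hT r x) with h0 | h0
  · exact absurd (Walk.eq_of_length_eq_zero (p := pth hT r x) h0).symm hx
  · exact h0

lemma adj_iff_par (hT : G.IsTree) (r : α) {a b : α} :
    G.Adj a b ↔ a ≠ b ∧ (par hT r a = b ∨ par hT r b = a) := by
  constructor
  · intro h
    refine ⟨h.ne, ?_⟩
    by_cases hb : b ∈ (pth hT r a).support
    · -- b is an ancestor of a
      left
      have ha : a ≠ r := by
        intro hr; subst hr
        exact h.ne' (anc_to_root hT hb)
      have hna : a ∉ (pth hT r b).support := by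
        intro hcon
        exact h.ne (anc_antisymm hT hcon hb)
      have hw : ((pth hT r b).concat h.symm).IsPath := by
        rw [Walk.isPath_def, Walk.support_concat]
        refine List.Nodup.append (pth_isPath hT r b).support_nodup (List.nodup_singleton a) ?_
        intro z hz hz'
        rw [List.mem_singleton] at hz'
        subst hz'
        exact hna hz
      have heq := pth_unique hT hw
      have hanc : anc hT r b a := hb
      have hd : depth hT r b + 1 = depth hT r a := by
        have := congrArg Walk.length heq
        rw [Walk.length_concat] at this
        unfold depth
        omega
      exact (par_eq_of hT ha hanc hd).symm
    · right
      have hw : ((pth hT r a).concat h).IsPath := by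
        rw [Walk.isPath_def, Walk.support_concat]
        refine List.Nodup.append (pth_isPath hT r a).support_nodup (List.nodup_singleton b) ?_
        intro z hz hz'
        rw [List.mem_singleton] at hz'
        subst hz'
        exact hb hz
      have heq := pth_unique hT hw
      have hbr : b ≠ r := by
        intro hr
        have := congrArg Walk.length heq
        rw [Walk.length_concat, hr, pth_rr hT r] at this
        simp at this
      have hanc : anc hT r a b := by
        unfold anc
        rw [← heq, Walk.support_concat]
        exact List.mem_append_left _ (Walk.end_mem_support _)
      have hd : depth hT r a + 1 = depth hT r b := by
        have := congrArg Walk.length heq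
        rw [Walk.length_concat] at this
        unfold depth
        omega
      exact (par_eq_of hT hbr hanc hd).symm
  · rintro ⟨hne, h | h⟩
    · subst h
      have ha : a ≠ r := by
        intro hr; subst hr
        rw [par_root hT] at hne
        exact hne rfl
      exact (adj_par hT ha).symm
    · subst h
      have hb : b ≠ r := by
        intro hr; subst hr
        rw [par_root hT] at hne
        exact hne.symm rfl
      exact adj_par hT hb

lemma par_ne (hT : G.IsTree) {r x : α} (hx : x ≠ r) : par hT r x ≠ x := by
  intro h
  have := depth_par hT hx
  rw [h] at this
  omega

lemma confine (hT : G.IsTree) {S : Set α} (hS : (G.induce S).Preconnected)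
    {x y : α} (hx : x ∈ S) (hy : y ∈ S) : ∀ z ∈ (pth hT x y).support, z ∈ S := by
  intro z hz
  obtain ⟨w₀⟩ := hS ⟨x, hx⟩ ⟨y, hy⟩
  let F : G.induce S →g G := ⟨Subtype.val, fun h => h⟩
  let p := (w₀.map F).toPath
  have hp : (p : G.Walk x y) = pth hT x y := pth_unique hT p.2
  rw [← hp] at hz
  have hz' := Walk.support_toPath_subset _ hz
  rw [Walk.support_map] at hz'
  obtain ⟨z₀, hz₀, rfl⟩ := List.mem_map.mp hz'
  exact z₀.2

end TreeTool

/-- Lifting walks along adjacency-preserving maps. -/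
lemma walk_lift {α β : Type} {G : SimpleGraph α} {H : SimpleGraph β} (g : α → β)
    {S : Set α} (hadj : ∀ {a b : α}, a ∈ S → b ∈ S → G.Adj a b → H.Adj (g a) (g b)) :
    ∀ {x y : α}, (w : G.Walk x y) → (∀ z ∈ w.support, z ∈ S) → H.Reachable (g x) (g y) := by
  intro x y w
  induction w with
  | nil => intro _; exact Reachable.refl _
  | cons h w ih =>
    intro hs
    rw [Walk.support_cons] at hs
    have h1 := hs _ (List.mem_cons_self)
    have h2 := hs _ (List.mem_cons_of_mem _ (Walk.start_mem_support _))
    exact (hadj h1 h2 h).reachable.trans (ih fun z hz => hs z (List.mem_cons_of_mem _ hz))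

section ParentGraph

variable {β : Type} [DecidableEq β] (P : β → β) (r : β) (m : β → ℕ)

/-- The graph determined by a parent function. -/
def pGraph : SimpleGraph β where
  Adj a b := a ≠ b ∧ (P a = b ∨ P b = a)
  symm := ⟨by rintro a b ⟨h1, h2⟩; exact ⟨h1.symm, h2.symm⟩⟩
  loopless := ⟨fun a h => h.1 rfl⟩

lemma pAdj_parent (hm : ∀ b, b ≠ r → m (P b) < m b) {b : β} (hb : b ≠ r) :
    (pGraph P).Adj (P b) b := by
  refine ⟨?_, Or.inr rfl⟩
  intro h
  have := hm b hb
  rw [h] at this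
  omega

/-- The canonical walk from the root to `b`, following parents. -/
noncomputable def pw (hm : ∀ b, b ≠ r → m (P b) < m b) (b : β) : (pGraph P).Walk r b :=
  if hb : b = r then (Walk.nil : (pGraph P).Walk r r).copy rfl hb.symm
  else (pw hm (P b)).concat (pAdj_parent P r m hm hb)
termination_by m b
decreasing_by exact hm b hb

variable {P r m} in
lemma m_le_of_mem_pw (hm : ∀ b, b ≠ r → m (P b) < m b) (b : β) : ∀ z ∈ (pw P r m hm b).support, m z ≤ m b := by
  by_cases hb : b = r
  · subst hb
    rw [pw, dif_pos rfl]
    intro z hz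
    rw [Walk.support_copy, Walk.support_nil, List.mem_singleton] at hz
    subst hz; exact le_rfl
  · rw [pw, dif_neg hb]
    intro z hz
    rw [Walk.support_concat, List.mem_append] at hz
    rcases hz with hz | hz
    · exact le_trans (m_le_of_mem_pw hm (P b) z hz) (le_of_lt (hm b hb))
    · rw [List.mem_singleton] at hz; subst hz; exact le_rfl
termination_by m b
decreasing_by exact hm b hb

variable {P r m} in
lemma pw_isPath (hm : ∀ b, b ≠ r → m (P b) < m b) (b : β) : (pw P r m hm b).IsPath := by
  by_cases hb : b = r
  · subst hb
    rw [pw, dif_pos rfl]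
    simp
  · rw [pw, dif_neg hb]
    rw [Walk.isPath_def, Walk.support_concat]
    refine List.Nodup.append ((pw_isPath hm (P b)).support_nodup) (List.nodup_singleton b) ?_
    intro z hz hz'
    rw [List.mem_singleton] at hz'
    have h1 := m_le_of_mem_pw hm (P b) z hz
    rw [hz'] at h1
    have := hm b hb
    omega
termination_by m b
decreasing_by exact hm b hb

variable {m} in
lemma pGraph_connected (hm : ∀ b, b ≠ r → m (P b) < m b) : (pGraph P).Connected := by
  rw [connected_iff]
  exact ⟨fun a b => ((pw P r m hm a).reverse.append (pw P r m hm b)).reachable, ⟨r⟩⟩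

variable {m} in
lemma pGraph_isAcyclic (hm : ∀ b, b ≠ r → m (P b) < m b) (hPr : P r = r) : (pGraph P).IsAcyclic := by
  intro u c hc
  classical
  have hsupp : c.support.toFinset.Nonempty := ⟨u, List.mem_toFinset.mpr c.start_mem_support⟩
  obtain ⟨x, hxmem, hmax⟩ := Finset.exists_max_image c.support.toFinset m hsupp
  rw [List.mem_toFinset] at hxmem
  have hmax' : ∀ z ∈ c.support, m z ≤ m x := fun z hz => hmax z (List.mem_toFinset.mpr hz)
  have hcyc := hc.rotate hxmem
  set c' := c.rotate x hxmem with hc'def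
  have hmem' : ∀ z ∈ c'.support.tail, z ∈ c.support := by
    intro z hz
    have := (Walk.support_rotate c x hxmem).mem_iff.mp hz
    exact List.mem_of_mem_tail this
  have hnbr : ∀ w, (pGraph P).Adj x w → w ∈ c'.support.tail → P x = w := by
    intro w hadj hw
    rcases hadj.2 with h | h
    · exact h
    · exfalso
      have hwr : w ≠ r := by
        intro hr
        rw [hr, hPr] at h
        rw [← h, hr] at hadj
        exact hadj.1 rfl
      have hlt := hm w hwr
      rw [h] at hlt
      have := hmax' w (hmem' w hw)
      omega
  clear_value c'
  clear hc'def
  cases c' with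
  | nil => exact hcyc.ne_nil rfl
  | cons h₁ q =>
    rename_i y
    have hyx : x ≠ y := h₁.1
    obtain ⟨z, h₂, q₂, hq⟩ := Walk.exists_eq_cons_of_ne hyx q.reverse
    have hqeq : q = q₂.reverse.concat h₂.symm := by
      have := congrArg Walk.reverse hq
      rwa [Walk.reverse_reverse, Walk.reverse_cons] at this
    have htail : (Walk.cons h₁ q).support.tail = q.support := by
      simp [Walk.support_cons]
    have hymem : y ∈ q.support := q.start_mem_support
    have hzmem : z ∈ q.support := by
      rw [← List.mem_reverse, ← Walk.support_reverse, hq, Walk.support_cons]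
      exact List.mem_cons_of_mem _ q₂.start_mem_support
    have hy := hnbr y h₁ (by rw [htail]; exact hymem)
    have hz := hnbr z h₂ (by rw [htail]; exact hzmem)
    have hyz : y = z := by rw [← hy, ← hz]
    have hnodup := hcyc.isCircuit.isTrail.edges_nodup
    rw [Walk.edges_cons] at hnodup
    have hnotin := (List.nodup_cons.mp hnodup).1
    apply hnotin
    rw [hqeq, Walk.edges_concat, List.concat_eq_append]
    refine List.mem_append_right _ ?_
    rw [List.mem_singleton, hyz]
    exact Sym2.eq_swap

variable {m} in
lemma pGraph_isTree (hm : ∀ b, b ≠ r → m (P b) < m b) (hPr : P r = r) : (pGraph P).IsTree :=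
  ⟨pGraph_connected P r hm, pGraph_isAcyclic P r hm hPr⟩

variable {P r m} in
lemma pw_eq_pth (hm : ∀ b, b ≠ r → m (P b) < m b) (hPr : P r = r) (b : β) :
    pw P r m hm b = TreeTool.pth (pGraph_isTree P r hm hPr) r b :=
  TreeTool.pth_unique _ (pw_isPath hm b)

variable {P r m} in
lemma anc_pw_parent (hm : ∀ b, b ≠ r → m (P b) < m b) (hPr : P r = r) {b : β} (hb : b ≠ r) :
    TreeTool.anc (pGraph_isTree P r hm hPr) r (P b) b := by
  rw [TreeTool.anc, ← pw_eq_pth hm hPr, pw, dif_neg hb,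
    Walk.support_concat]
  exact List.mem_append_left _ (Walk.end_mem_support _)

end ParentGraph

section Components

lemma edgeLinked_symm {E' : Finset (Finset V)} {a b : Finset V} (h : edgeLinked E' a b) :
    edgeLinked E' b a := by
  refine (@Relation.ReflTransGen.stdSymm _ _ ⟨?_⟩).symm _ _ h
  rintro x y ⟨h1, h2, h3⟩
  exact ⟨h2, h1, by rwa [Finset.inter_comm]⟩

lemma mem_component_iff {E' : Finset (Finset V)} {f g : Finset V} :
    g ∈ component E' f ↔ g ∈ E' ∧ edgeLinked E' f g := by
  simp [component, Finset.mem_filter]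

lemma mem_component_self {E' : Finset (Finset V)} {f : Finset V} (hf : f ∈ E') :
    f ∈ component E' f := mem_component_iff.mpr ⟨hf, Relation.ReflTransGen.refl⟩

lemma component_subset {E' : Finset (Finset V)} {f : Finset V} : component E' f ⊆ E' :=
  fun x hx => (mem_component_iff.mp hx).1

lemma component_eq_of_mem {E' : Finset (Finset V)} {f g : Finset V} (h : g ∈ component E' f) :
    component E' g = component E' f := by
  rw [mem_component_iff] at h
  ext x
  rw [mem_component_iff, mem_component_iff]
  constructor
  · rintro ⟨hx, hl⟩; exact ⟨hx, h.2.trans hl⟩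
  · rintro ⟨hx, hl⟩; exact ⟨hx, (edgeLinked_symm h.2).trans hl⟩

lemma comp_eq_of_isComponent {E' C : Finset (Finset V)} (hC : IsComponent E' C)
    {f : Finset V} (hf : f ∈ C) : component E' f = C := by
  obtain ⟨g, hg, rfl⟩ := hC
  exact component_eq_of_mem hf

lemma mem_component_of_inter {E' : Finset (Finset V)} {f g h : Finset V}
    (hg : g ∈ component E' f) (hh : h ∈ E') (hi : (g ∩ h).Nonempty) :
    h ∈ component E' f := by
  rw [mem_component_iff] at hg ⊢
  exact ⟨hh, hg.2.tail ⟨hg.1, hh, hi⟩⟩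

end Components

namespace Fwd

/-- Context for the forward direction: a DBD of `E` rooted at `e`, and a component `C`
of `E \ e`. -/
structure Ctx (E : Finset (Finset V)) (e : Finset V) where
  he : e ∈ E
  D : DBD E e
  C : Finset (Finset V)
  hC : IsComponent (E.erase e) C

variable {E : Finset (Finset V)} {e : Finset V}

def rt (X : Ctx E e) : {f // f ∈ E} := ⟨e, X.he⟩

lemma Xsub (X : Ctx E e) {f : Finset V} (hf : f ∈ insert e X.C) : f ∈ E := by
  rcases Finset.mem_insert.mp hf with h | h
  · exact h ▸ X.he
  · obtain ⟨g, hg, hCeq⟩ := X.hC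
    exact Finset.mem_of_mem_erase (component_subset (hCeq ▸ h))

abbrev B (X : Ctx E e) := {f // f ∈ insert e X.C}

def ι (X : Ctx E e) (b : B X) : {f // f ∈ E} := ⟨b.1, Xsub X b.2⟩

def eB (X : Ctx E e) : B X := ⟨e, Finset.mem_insert_self _ _⟩

/-- Ancestor relation in the tree of `D` rooted at `e`. -/
def ancT (X : Ctx E e) (x y : {f // f ∈ E}) : Prop :=
  TreeTool.anc X.D.J.isTree (rt X) x y

noncomputable def depT (X : Ctx E e) (x : {f // f ∈ E}) : ℕ :=
  TreeTool.depth X.D.J.isTree (rt X) x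

lemma val_eq_of_eq {γ : Type} {p : γ → Prop} {a b : {x // p x}} (h : a = b) : a.1 = b.1 :=
  congrArg _ h

lemma ne_eB_val {X : Ctx E e} {b : B X} (hb : b ≠ eB X) : b.1 ≠ e :=
  fun h => hb (Subtype.ext h)

lemma ι_ne_rt {X : Ctx E e} {b : B X} (hb : b ≠ eB X) : ι X b ≠ rt X :=
  fun h => ne_eB_val hb (congrArg Subtype.val h)

open Classical in
lemma exists_cpar (X : Ctx E e) (b : B X) (hb : b ≠ eB X) :
    ∃ z : {f // f ∈ E}, (z.1 ∈ insert e X.C ∧ ancT X z (ι X b) ∧ z ≠ ι X b) ∧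
      ∀ z' : {f // f ∈ E}, (z'.1 ∈ insert e X.C ∧ ancT X z' (ι X b) ∧ z' ≠ ι X b) →
        depT X z' ≤ depT X z := by
  classical
  set s : Finset {f // f ∈ E} :=
    Finset.univ.filter (fun z => z.1 ∈ insert e X.C ∧ ancT X z (ι X b) ∧ z ≠ ι X b) with hs
  have hmem : ∀ z : {f // f ∈ E},
      z ∈ s ↔ (z.1 ∈ insert e X.C ∧ ancT X z (ι X b) ∧ z ≠ ι X b) := by
    intro z
    rw [hs, Finset.mem_filter]
    simp
  have hne : s.Nonempty := by
    refine ⟨rt X, (hmem _).mpr ⟨Finset.mem_insert_self _ _, TreeTool.anc_root _ _ _, ?_⟩⟩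
    exact fun h => (ι_ne_rt hb) h.symm
  obtain ⟨z, hz, hmax⟩ := Finset.exists_max_image s (depT X) hne
  exact ⟨z, (hmem z).mp hz, fun z' h' => hmax z' ((hmem z').mpr h')⟩

open Classical in
noncomputable def P (X : Ctx E e) : B X → B X := fun b =>
  if hb : b = eB X then eB X
  else ⟨(exists_cpar X b hb).choose.1, (exists_cpar X b hb).choose_spec.1.1⟩

lemma ιP (X : Ctx E e) {b : B X} (hb : b ≠ eB X) :
    ι X (P X b) = (exists_cpar X b hb).choose := by
  rw [P, dif_neg hb]
  exact Subtype.ext rfl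

noncomputable def mF (X : Ctx E e) : B X → ℕ := fun b => depT X (ι X b)

lemma hmF (X : Ctx E e) : ∀ b, b ≠ eB X → mF X (P X b) < mF X b := by
  intro b hb
  have hspec := (exists_cpar X b hb).choose_spec
  have hι := ιP X hb
  unfold mF
  rw [hι]
  exact TreeTool.depth_lt_of_anc _ hspec.1.2.1 hspec.1.2.2

lemma hPe (X : Ctx E e) : P X (eB X) = eB X := dif_pos rfl

noncomputable def hT' (X : Ctx E e) : (pGraph (P X)).IsTree :=
  pGraph_isTree (P X) (eB X) (hmF X) (hPe X)

/-- Ancestor relation in the new tree. -/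
def anc' (X : Ctx E e) (a b : B X) : Prop := TreeTool.anc (hT' X) (eB X) a b

lemma ι_inj {X : Ctx E e} {a b : B X} (h : ι X a = ι X b) : a = b := by
  have h2 := congrArg Subtype.val h
  exact Subtype.ext h2

lemma transfer (X : Ctx E e) : ∀ n (b a : B X), depT X (ι X b) ≤ n →
    ancT X (ι X a) (ι X b) → anc' X a b := by
  intro n
  induction n using Nat.strong_induction_on with
  | _ n IH =>
  intro b a hn hab
  by_cases heq : a = b
  · subst heq; exact TreeTool.anc_refl _ _ _
  by_cases hbe : b = eB X
  · subst hbe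
    have hroot : ι X a = rt X := TreeTool.anc_to_root _ hab
    exact absurd (ι_inj (show ι X a = ι X (eB X) from hroot)) heq
  have hspec := (exists_cpar X b hbe).choose_spec
  have hι := ιP X hbe
  have hancP : ancT X (ι X (P X b)) (ι X b) := by rw [hι]; exact hspec.1.2.1
  have hPne : ι X (P X b) ≠ ι X b := by rw [hι]; exact hspec.1.2.2
  have hιa_ne : ι X a ≠ ι X b := fun h => heq (ι_inj h)
  have hle : depT X (ι X a) ≤ depT X (ι X (P X b)) := by
    rw [hι]; exact hspec.2 (ι X a) ⟨a.2, hab, hιa_ne⟩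
  have hancaP : ancT X (ι X a) (ι X (P X b)) :=
    TreeTool.anc_of_anc_anc_le _ hab hancP hle
  have hlt : depT X (ι X (P X b)) < depT X (ι X b) :=
    TreeTool.depth_lt_of_anc _ hancP hPne
  have h1 : anc' X a (P X b) := IH (depT X (ι X (P X b))) (by omega) (P X b) a le_rfl hancaP
  have h2 : anc' X (P X b) b := anc_pw_parent (hmF X) (hPe X) hbe
  exact TreeTool.anc_trans _ h1 h2

lemma cpar_eq (X : Ctx E e) {x y : {f // f ∈ E}} (hx : x.1 ∈ insert e X.C) (hxr : x ≠ rt X)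
    (hy : y.1 ∈ insert e X.C) (hpar : TreeTool.par X.D.J.isTree (rt X) x = y) :
    P X ⟨x.1, hx⟩ = ⟨y.1, hy⟩ := by
  have hbe : (⟨x.1, hx⟩ : B X) ≠ eB X := by
    intro h
    have h2 := congrArg Subtype.val h
    exact hxr (Subtype.ext h2)
  have hιx : ι X ⟨x.1, hx⟩ = x := Subtype.ext rfl
  have hspec := (exists_cpar X ⟨x.1, hx⟩ hbe).choose_spec
  set z := (exists_cpar X ⟨x.1, hx⟩ hbe).choose with hz
  have hyanc : ancT X y x := by
    rw [← hpar]; exact TreeTool.anc_par _ hxr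
  have hyne : y ≠ x := by rw [← hpar]; exact TreeTool.par_ne _ hxr
  have hydep : depT X y + 1 = depT X x := by
    rw [← hpar]; exact TreeTool.depth_par _ hxr
  have hzancx : ancT X z x := by rw [← hιx]; exact hspec.1.2.1
  have hzne : z ≠ x := by rw [← hιx]; exact hspec.1.2.2
  have h1 : depT X y ≤ depT X z := by
    refine hspec.2 y ⟨hy, ?_, ?_⟩ <;> rw [hιx]
    exacts [hyanc, hyne]
  have h2 : depT X z < depT X x := TreeTool.depth_lt_of_anc _ hzancx hzne
  have h3 : ancT X y z := TreeTool.anc_of_anc_anc_le _ hyanc hzancx h1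
  have hyz : y = z := by
    by_contra hne
    have hlt := TreeTool.depth_lt_of_anc (r := rt X) X.D.J.isTree h3 hne
    unfold depT at h1 h2 hydep
    omega
  rw [P, dif_neg hbe]
  exact Subtype.ext (congrArg Subtype.val hyz).symm

lemma adjDown (X : Ctx E e) {x y : {f // f ∈ E}} (hx : x.1 ∈ insert e X.C)
    (hy : y.1 ∈ insert e X.C) (hadj : X.D.J.T.Adj x y) :
    (pGraph (P X)).Adj ⟨x.1, hx⟩ ⟨y.1, hy⟩ := by
  have hne : (⟨x.1, hx⟩ : B X) ≠ ⟨y.1, hy⟩ := by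
    intro h
    have h2 := congrArg Subtype.val h
    exact hadj.ne (Subtype.ext h2)
  rw [TreeTool.adj_iff_par X.D.J.isTree (rt X)] at hadj
  refine ⟨hne, ?_⟩
  rcases hadj.2 with h | h
  · -- par x = y : y is the parent of x
    have hxr : x ≠ rt X := by
      intro hr
      rw [hr, TreeTool.par_root] at h
      exact hadj.1 (hr.trans h)
    exact Or.inl (cpar_eq X hx hxr hy h)
  · have hyr : y ≠ rt X := by
      intro hr
      rw [hr, TreeTool.par_root] at h
      exact hadj.1 (h.symm.trans hr.symm)
    exact Or.inr (cpar_eq X hy hyr hx h)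

lemma conn' (X : Ctx E e) :
    ∀ v : V, ((pGraph (P X)).induce {f : B X | v ∈ f.1}).Preconnected := by
  intro v xb yb
  by_cases hxy : xb = yb
  · subst hxy; exact Reachable.refl _
  have hvx : v ∈ (xb.1 : Finset V) := xb.2
  have hvy : v ∈ (yb.1 : Finset V) := yb.2
  set x := ι X xb.1 with hxdef
  set y := ι X yb.1 with hydef
  have hxyne : x ≠ y := by
    intro h
    have h2 := congrArg Subtype.val h
    exact hxy (Subtype.ext (Subtype.ext h2))
  obtain ⟨w, hwC, hwv⟩ : ∃ w ∈ X.C, v ∈ w := by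
    rcases Finset.mem_insert.mp xb.1.2 with h | h
    · rcases Finset.mem_insert.mp yb.1.2 with h' | h'
      · exact absurd (Subtype.ext (Subtype.ext (h.trans h'.symm))) hxy
      · exact ⟨yb.1.1, h', hvy⟩
    · exact ⟨xb.1.1, h, hvx⟩
  have hwE : w ∈ E.erase e := by
    obtain ⟨g, hg, hCeq⟩ := X.hC
    exact component_subset (hCeq ▸ hwC)
  set S : Set {f // f ∈ E} := {z | v ∈ z.1 ∧ z.1 ∈ insert e X.C} with hS
  have hsub : ∀ z ∈ (TreeTool.pth X.D.J.isTree x y).support, z ∈ S := by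
    intro z hz
    have hv := TreeTool.confine X.D.J.isTree (X.D.J.conn v) hvx hvy z hz
    refine ⟨hv, ?_⟩
    by_cases hze : z.1 = e
    · rw [hze]; exact Finset.mem_insert_self _ _
    · refine Finset.mem_insert_of_mem ?_
      have hzE : z.1 ∈ E.erase e := Finset.mem_erase.mpr ⟨hze, z.2⟩
      have hmem : z.1 ∈ component (E.erase e) w :=
        mem_component_of_inter (mem_component_self hwE) hzE
          ⟨v, Finset.mem_inter.mpr ⟨hwv, hv⟩⟩
      rwa [comp_eq_of_isComponent X.hC hwC] at hmem
  have hxS : x ∈ S := ⟨hvx, xb.1.2⟩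
  have hyS : y ∈ S := ⟨hvy, yb.1.2⟩
  let g : {f // f ∈ E} → {b : B X // b ∈ {f : B X | v ∈ f.1}} := fun z =>
    if h : z ∈ S then ⟨⟨z.1, h.2⟩, h.1⟩ else xb
  have hadj : ∀ {a b : {f // f ∈ E}}, a ∈ S → b ∈ S → X.D.J.T.Adj a b →
      ((pGraph (P X)).induce {f : B X | v ∈ f.1}).Adj (g a) (g b) := by
    intro a b ha hb h
    simp only [g, dif_pos ha, dif_pos hb]
    exact adjDown X ha.2 hb.2 h
  have hreach := walk_lift g hadj (TreeTool.pth X.D.J.isTree x y) hsub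
  have hgx : g x = xb := by
    simp only [g, dif_pos hxS]
    exact Subtype.ext (Subtype.ext rfl)
  have hgy : g y = yb := by
    simp only [g, dif_pos hyS]
    exact Subtype.ext (Subtype.ext rfl)
  rwa [hgx, hgy] at hreach

lemma disj' (X : Ctx E e) : ∀ a b : B X, a ≠ b →
    ¬ onTreePath (pGraph (P X)) ⟨e, Finset.mem_insert_self e X.C⟩ b a →
    ¬ onTreePath (pGraph (P X)) ⟨e, Finset.mem_insert_self e X.C⟩ a b →
    a.1 ∩ b.1 = ∅ := by
  intro a b hne h1 h2
  by_contra hcon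
  obtain ⟨v, hv⟩ := Finset.nonempty_iff_ne_empty.mpr hcon
  rw [Finset.mem_inter] at hv
  rw [TreeTool.onTreePath_iff (hT' X)] at h1 h2
  by_cases ha : a = eB X
  · subst ha
    exact h1 (TreeTool.anc_root _ _ _)
  by_cases hb : b = eB X
  · subst hb
    exact h2 (TreeTool.anc_root _ _ _)
  have hιne : ι X a ≠ ι X b := fun h => hne (ι_inj h)
  by_cases hanc : ancT X (ι X a) (ι X b)
  · exact h1 (transfer X (depT X (ι X b)) b a le_rfl hanc)
  by_cases hanc2 : ancT X (ι X b) (ι X a)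
  · exact h2 (transfer X (depT X (ι X a)) a b le_rfl hanc2)
  have hdisj := X.D.disj (ι X a) (ι X b) hιne
    (by rw [TreeTool.onTreePath_iff X.D.J.isTree]; exact hanc)
    (by rw [TreeTool.onTreePath_iff X.D.J.isTree]; exact hanc2)
  have : v ∈ (ι X a).1 ∩ (ι X b).1 := Finset.mem_inter.mpr ⟨hv.1, hv.2⟩
  rw [hdisj] at this
  exact Finset.notMem_empty v this

/-- The forward direction: restricting a DBD of `E` to a component plus `e`. -/
noncomputable def forward (X : Ctx E e) : DBD (insert e X.C) e where
  J := { T := pGraph (P X), isTree := hT' X, conn := conn' X }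
  rootMem := Finset.mem_insert_self _ _
  disj := disj' X

end Fwd

namespace Bwd

/-- Context for the backward direction: a DBD of `C ∪ {e}` for every component `C`. -/
structure Ctx (E : Finset (Finset V)) (e : Finset V) where
  he : e ∈ E
  D : ∀ C : Finset (Finset V), IsComponent (E.erase e) C → DBD (insert e C) e

variable {E : Finset (Finset V)} {e : Finset V}

def eB (X : Ctx E e) : {f // f ∈ E} := ⟨e, X.he⟩

lemma isComp_subE (X : Ctx E e) {C : Finset (Finset V)} (hC : IsComponent (E.erase e) C)
    {f : Finset V} (hf : f ∈ insert e C) : f ∈ E := by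
  rcases Finset.mem_insert.mp hf with h | h
  · exact h ▸ X.he
  · obtain ⟨g, hg, rfl⟩ := hC
    exact Finset.mem_of_mem_erase (component_subset h)

noncomputable def depC (X : Ctx E e) (C : Finset (Finset V)) (hC : IsComponent (E.erase e) C)
    (f : Finset V) (hf : f ∈ insert e C) : ℕ :=
  TreeTool.depth (X.D C hC).J.isTree ⟨e, Finset.mem_insert_self _ _⟩ ⟨f, hf⟩

noncomputable def parC (X : Ctx E e) (C : Finset (Finset V)) (hC : IsComponent (E.erase e) C)
    (f : Finset V) (hf : f ∈ insert e C) : Finset V :=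
  (TreeTool.par (X.D C hC).J.isTree ⟨e, Finset.mem_insert_self _ _⟩ ⟨f, hf⟩).1

lemma parC_mem (X : Ctx E e) (C : Finset (Finset V)) (hC : IsComponent (E.erase e) C)
    (f : Finset V) (hf : f ∈ insert e C) : parC X C hC f hf ∈ insert e C :=
  (TreeTool.par (X.D C hC).J.isTree ⟨e, Finset.mem_insert_self _ _⟩ ⟨f, hf⟩).2

lemma depC_congr (X : Ctx E e) {C C' : Finset (Finset V)} (h : C = C') {f f' : Finset V}
    (hff : f = f') (hC : IsComponent (E.erase e) C) (hC' : IsComponent (E.erase e) C')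
    (hf : f ∈ insert e C) (hf' : f' ∈ insert e C') :
    depC X C hC f hf = depC X C' hC' f' hf' := by
  subst h; subst hff; rfl

lemma parC_congr (X : Ctx E e) {C C' : Finset (Finset V)} (h : C = C') {f f' : Finset V}
    (hff : f = f') (hC : IsComponent (E.erase e) C) (hC' : IsComponent (E.erase e) C')
    (hf : f ∈ insert e C) (hf' : f' ∈ insert e C') :
    parC X C hC f hf = parC X C' hC' f' hf' := by
  subst h; subst hff; rfl

lemma mem_erase_of_ne (X : Ctx E e) {b : {f // f ∈ E}} (hb : b ≠ eB X) : b.1 ∈ E.erase e :=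
  Finset.mem_erase.mpr ⟨fun h => hb (Subtype.ext h), b.2⟩

/-- The component of an edge `b ≠ e`. -/
noncomputable def cmp (X : Ctx E e) (b : {f // f ∈ E}) : Finset (Finset V) :=
  component (E.erase e) b.1

lemma cmp_isComp (X : Ctx E e) {b : {f // f ∈ E}} (hb : b ≠ eB X) :
    IsComponent (E.erase e) (cmp X b) :=
  ⟨b.1, mem_erase_of_ne X hb, rfl⟩

lemma self_mem_cmp (X : Ctx E e) {b : {f // f ∈ E}} (hb : b ≠ eB X) : b.1 ∈ cmp X b :=
  mem_component_self (mem_erase_of_ne X hb)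

open Classical in
noncomputable def P (X : Ctx E e) : {f // f ∈ E} → {f // f ∈ E} := fun b =>
  if hb : b = eB X then eB X
  else ⟨parC X (cmp X b) (cmp_isComp X hb) b.1 (Finset.mem_insert_of_mem (self_mem_cmp X hb)),
    isComp_subE X (cmp_isComp X hb)
      (parC_mem X (cmp X b) (cmp_isComp X hb) b.1 (Finset.mem_insert_of_mem (self_mem_cmp X hb)))⟩

noncomputable def mB (X : Ctx E e) : {f // f ∈ E} → ℕ := fun b =>
  if hb : b = eB X then 0
  else depC X (cmp X b) (cmp_isComp X hb) b.1 (Finset.mem_insert_of_mem (self_mem_cmp X hb))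

lemma depC_pos (X : Ctx E e) (C : Finset (Finset V)) (hC : IsComponent (E.erase e) C)
    {f : Finset V} (hf : f ∈ insert e C) (hfe : f ≠ e) : 0 < depC X C hC f hf :=
  TreeTool.depth_pos _ (fun h => hfe (congrArg Subtype.val h))

lemma depC_par (X : Ctx E e) (C : Finset (Finset V)) (hC : IsComponent (E.erase e) C)
    {f : Finset V} (hf : f ∈ insert e C) (hfe : f ≠ e)
    (hmem : parC X C hC f hf ∈ insert e C) :
    depC X C hC (parC X C hC f hf) hmem + 1 = depC X C hC f hf :=
  TreeTool.depth_par (X.D C hC).J.isTree (fun h => hfe (congrArg Subtype.val h))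

lemma hmB (X : Ctx E e) : ∀ b, b ≠ eB X → mB X (P X b) < mB X b := by
  intro b hb
  have hbe : b.1 ≠ e := fun h => hb (Subtype.ext h)
  have hrhs : mB X b = depC X (cmp X b) (cmp_isComp X hb) b.1
      (Finset.mem_insert_of_mem (self_mem_cmp X hb)) := dif_neg hb
  have hpos : 0 < mB X b := by
    rw [hrhs]
    exact depC_pos X _ _ _ hbe
  by_cases hpe : parC X (cmp X b) (cmp_isComp X hb) b.1
      (Finset.mem_insert_of_mem (self_mem_cmp X hb)) = e
  · have hPb : P X b = eB X := by
      rw [P, dif_neg hb]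
      exact Subtype.ext hpe
    rw [hPb]
    have : mB X (eB X) = 0 := dif_pos rfl
    omega
  · have hval : (P X b).1 = parC X (cmp X b) (cmp_isComp X hb) b.1
        (Finset.mem_insert_of_mem (self_mem_cmp X hb)) := by
      rw [P, dif_neg hb]
    have hPbe : P X b ≠ eB X := by
      intro h
      apply hpe
      rw [← hval]
      exact congrArg Subtype.val h
    have hPC : (P X b).1 ∈ cmp X b := by
      rw [hval]
      rcases Finset.mem_insert.mp (parC_mem X (cmp X b) (cmp_isComp X hb) b.1
        (Finset.mem_insert_of_mem (self_mem_cmp X hb))) with h | h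
      · exact absurd h hpe
      · exact h
    have hcc : cmp X (P X b) = cmp X b := component_eq_of_mem hPC
    have hlhs : mB X (P X b) = depC X (cmp X b) (cmp_isComp X hb) (P X b).1
        (Finset.mem_insert_of_mem hPC) := by
      rw [mB, dif_neg hPbe]
      exact depC_congr X hcc rfl _ _ _ _
    have hkey := depC_par X (cmp X b) (cmp_isComp X hb)
      (Finset.mem_insert_of_mem (self_mem_cmp X hb)) hbe (hval ▸ Finset.mem_insert_of_mem hPC)
    have hlhs2 : depC X (cmp X b) (cmp_isComp X hb) (P X b).1 (Finset.mem_insert_of_mem hPC)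
        = depC X (cmp X b) (cmp_isComp X hb) (parC X (cmp X b) (cmp_isComp X hb) b.1
          (Finset.mem_insert_of_mem (self_mem_cmp X hb))) (hval ▸ Finset.mem_insert_of_mem hPC) :=
      depC_congr X rfl hval _ _ _ _
    rw [hrhs, hlhs, hlhs2]
    omega

lemma hPeB (X : Ctx E e) : P X (eB X) = eB X := dif_pos rfl

noncomputable def hTg (X : Ctx E e) : (pGraph (P X)).IsTree :=
  pGraph_isTree (P X) (eB X) (hmB X) (hPeB X)

lemma P_eq_of_parC (X : Ctx E e) (C : Finset (Finset V)) (hC : IsComponent (E.erase e) C)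
    {a b : {f // f ∈ E}} (ha : a.1 ∈ insert e C) (hb : b.1 ∈ insert e C) (hne : a ≠ b)
    (h : TreeTool.par (X.D C hC).J.isTree ⟨e, Finset.mem_insert_self _ _⟩ ⟨a.1, ha⟩
      = ⟨b.1, hb⟩) : P X a = b := by
  have hae : a.1 ≠ e := by
    intro hea
    have hroot : (⟨a.1, ha⟩ : {f // f ∈ insert e C}) = ⟨e, Finset.mem_insert_self _ _⟩ :=
      Subtype.ext hea
    rw [hroot, TreeTool.par_root] at h
    have h2 : e = b.1 := congrArg Subtype.val h
    exact hne (Subtype.ext (hea.trans h2))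
  have hab : a ≠ eB X := fun hh => hae (congrArg Subtype.val hh)
  have haC : a.1 ∈ C := by
    rcases Finset.mem_insert.mp ha with h' | h'
    · exact absurd h' hae
    · exact h'
  have hcc : cmp X a = C := comp_eq_of_isComponent hC haC
  have hval : (P X a).1 = parC X (cmp X a) (cmp_isComp X hab) a.1
      (Finset.mem_insert_of_mem (self_mem_cmp X hab)) := by
    rw [P, dif_neg hab]
  have hcongr : parC X (cmp X a) (cmp_isComp X hab) a.1
      (Finset.mem_insert_of_mem (self_mem_cmp X hab)) = parC X C hC a.1 ha :=
    parC_congr X hcc rfl _ _ _ _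
  apply Subtype.ext
  rw [hval, hcongr]
  have h2 := congrArg Subtype.val h
  exact h2

lemma adjUp (X : Ctx E e) (C : Finset (Finset V)) (hC : IsComponent (E.erase e) C)
    (a b : {f // f ∈ E}) (ha : a.1 ∈ insert e C) (hb : b.1 ∈ insert e C)
    (hadj : (X.D C hC).J.T.Adj ⟨a.1, ha⟩ ⟨b.1, hb⟩) : (pGraph (P X)).Adj a b := by
  have hne : a ≠ b := by
    intro h
    subst h
    exact hadj.ne (Subtype.ext rfl)
  refine ⟨hne, ?_⟩
  rw [TreeTool.adj_iff_par (X.D C hC).J.isTree ⟨e, Finset.mem_insert_self _ _⟩] at hadj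
  rcases hadj.2 with h | h
  · exact Or.inl (P_eq_of_parC X C hC ha hb hne h)
  · exact Or.inr (P_eq_of_parC X C hC hb ha (Ne.symm hne) h)

lemma ancUp (X : Ctx E e) : ∀ n (C : Finset (Finset V)) (hC : IsComponent (E.erase e) C)
    (b a : {f // f ∈ E}) (ha : a.1 ∈ insert e C) (hb : b.1 ∈ insert e C),
    depC X C hC b.1 hb ≤ n →
    TreeTool.anc (X.D C hC).J.isTree ⟨e, Finset.mem_insert_self _ _⟩ ⟨a.1, ha⟩ ⟨b.1, hb⟩ →
    TreeTool.anc (hTg X) (eB X) a b := by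
  intro n
  induction n using Nat.strong_induction_on with
  | _ n IH =>
  intro C hC b a ha hb hn hanc
  by_cases heq : a = b
  · subst heq; exact TreeTool.anc_refl _ _ _
  have hbe : b.1 ≠ e := by
    intro hbe
    have hbeq : (⟨b.1, hb⟩ : {f // f ∈ insert e C}) = ⟨e, Finset.mem_insert_self _ _⟩ :=
      Subtype.ext hbe
    rw [hbeq] at hanc
    have h2 := TreeTool.anc_to_root _ hanc
    have h3 := congrArg Subtype.val h2
    exact heq (Subtype.ext (h3.trans hbe.symm))
  have hbB : b ≠ eB X := fun h => hbe (congrArg Subtype.val h)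
  have hbr : (⟨b.1, hb⟩ : {f // f ∈ insert e C}) ≠ ⟨e, Finset.mem_insert_self _ _⟩ :=
    fun h => hbe (congrArg Subtype.val h)
  have hpanc := TreeTool.anc_par (X.D C hC).J.isTree hbr
  have hpdep := TreeTool.depth_par (X.D C hC).J.isTree hbr
  have hane : (⟨a.1, ha⟩ : {f // f ∈ insert e C}) ≠ ⟨b.1, hb⟩ := by
    intro h
    have h2 := congrArg Subtype.val h
    exact heq (Subtype.ext h2)
  have hal := TreeTool.depth_lt_of_anc (X.D C hC).J.isTree hanc hane
  have hle : TreeTool.depth (X.D C hC).J.isTree ⟨e, Finset.mem_insert_self _ _⟩ ⟨a.1, ha⟩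
      ≤ TreeTool.depth (X.D C hC).J.isTree ⟨e, Finset.mem_insert_self _ _⟩
        (TreeTool.par (X.D C hC).J.isTree ⟨e, Finset.mem_insert_self _ _⟩ ⟨b.1, hb⟩) := by
    omega
  have hancap := TreeTool.anc_of_anc_anc_le (X.D C hC).J.isTree hanc hpanc hle
  -- identify P X b with the parent
  have haC : b.1 ∈ C := by
    rcases Finset.mem_insert.mp hb with h' | h'
    · exact absurd h' hbe
    · exact h'
  have hcc : cmp X b = C := comp_eq_of_isComponent hC haC
  have hval : (P X b).1
      = (TreeTool.par (X.D C hC).J.isTree ⟨e, Finset.mem_insert_self _ _⟩ ⟨b.1, hb⟩).1 := by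
    rw [P, dif_neg hbB]
    exact parC_congr X hcc rfl _ _ _ _
  have hPmem : (P X b).1 ∈ insert e C := by
    rw [hval]
    exact (TreeTool.par (X.D C hC).J.isTree ⟨e, Finset.mem_insert_self _ _⟩ ⟨b.1, hb⟩).2
  have hPeq : (⟨(P X b).1, hPmem⟩ : {f // f ∈ insert e C})
      = TreeTool.par (X.D C hC).J.isTree ⟨e, Finset.mem_insert_self _ _⟩ ⟨b.1, hb⟩ :=
    Subtype.ext hval
  have h1 : TreeTool.anc (hTg X) (eB X) a (P X b) := by
    refine IH (depC X C hC (P X b).1 hPmem) ?_ C hC (P X b) a ha hPmem le_rfl ?_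
    · have : depC X C hC (P X b).1 hPmem
          = TreeTool.depth (X.D C hC).J.isTree ⟨e, Finset.mem_insert_self _ _⟩
            (TreeTool.par (X.D C hC).J.isTree ⟨e, Finset.mem_insert_self _ _⟩ ⟨b.1, hb⟩) := by
        rw [depC]
        exact congrArg _ hPeq
      have hnb : depC X C hC b.1 hb
          = TreeTool.depth (X.D C hC).J.isTree ⟨e, Finset.mem_insert_self _ _⟩ ⟨b.1, hb⟩ := rfl
      omega
    · rw [hPeq]
      exact hancap
  have h2 : TreeTool.anc (hTg X) (eB X) (P X b) b := anc_pw_parent (hmB X) (hPeB X) hbB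
  exact TreeTool.anc_trans _ h1 h2

lemma connB (X : Ctx E e) (v : V) (C : Finset (Finset V)) (hC : IsComponent (E.erase e) C)
    (xb yb : {b : {f // f ∈ E} // b ∈ {f : {f // f ∈ E} | v ∈ f.1}})
    (hx : xb.1.1 ∈ insert e C) (hy : yb.1.1 ∈ insert e C) :
    ((pGraph (P X)).induce {f : {f // f ∈ E} | v ∈ f.1}).Reachable xb yb := by
  have hpre := (X.D C hC).J.conn v
  obtain ⟨w0⟩ := hpre ⟨⟨xb.1.1, hx⟩, xb.2⟩ ⟨⟨yb.1.1, hy⟩, yb.2⟩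
  let g : {f : {f // f ∈ insert e C} // f ∈ {f : {f // f ∈ insert e C} | v ∈ f.1}} →
      {b : {f // f ∈ E} // b ∈ {f : {f // f ∈ E} | v ∈ f.1}} :=
    fun z => ⟨⟨z.1.1, isComp_subE X hC z.1.2⟩, z.2⟩
  have hadj : ∀ {a b}, a ∈ (Set.univ : Set _) → b ∈ (Set.univ : Set _) →
      ((X.D C hC).J.T.induce {f : {f // f ∈ insert e C} | v ∈ f.1}).Adj a b →
      ((pGraph (P X)).induce {f : {f // f ∈ E} | v ∈ f.1}).Adj (g a) (g b) := by
    intro a b _ _ h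
    exact adjUp X C hC _ _ a.1.2 b.1.2 h
  have hreach := walk_lift g hadj w0 (fun z _ => Set.mem_univ z)
  have hgx : g ⟨⟨xb.1.1, hx⟩, xb.2⟩ = xb := Subtype.ext (Subtype.ext rfl)
  have hgy : g ⟨⟨yb.1.1, hy⟩, yb.2⟩ = yb := Subtype.ext (Subtype.ext rfl)
  rwa [hgx, hgy] at hreach

lemma connG (X : Ctx E e) :
    ∀ v : V, ((pGraph (P X)).induce {f : {f // f ∈ E} | v ∈ f.1}).Preconnected := by
  intro v xb yb
  by_cases hxy : xb = yb
  · subst hxy; exact Reachable.refl _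
  have hvx : v ∈ xb.1.1 := xb.2
  have hvy : v ∈ yb.1.1 := yb.2
  by_cases hxe : xb.1 = eB X
  · by_cases hye : yb.1 = eB X
    · exact absurd (Subtype.ext (hxe.trans hye.symm)) hxy
    · refine connB X v (cmp X yb.1) (cmp_isComp X hye) xb yb ?_ ?_
      · have h2 : xb.1.1 = e := congrArg Subtype.val hxe
        rw [h2]
        exact Finset.mem_insert_self _ _
      · exact Finset.mem_insert_of_mem (self_mem_cmp X hye)
  · by_cases hye : yb.1 = eB X
    · refine connB X v (cmp X xb.1) (cmp_isComp X hxe) xb yb ?_ ?_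
      · exact Finset.mem_insert_of_mem (self_mem_cmp X hxe)
      · have h2 : yb.1.1 = e := congrArg Subtype.val hye
        rw [h2]
        exact Finset.mem_insert_self _ _
    · have hyC : yb.1.1 ∈ cmp X xb.1 :=
        mem_component_of_inter (mem_component_self (mem_erase_of_ne X hxe))
          (mem_erase_of_ne X hye) ⟨v, Finset.mem_inter.mpr ⟨hvx, hvy⟩⟩
      exact connB X v (cmp X xb.1) (cmp_isComp X hxe) xb yb
        (Finset.mem_insert_of_mem (self_mem_cmp X hxe)) (Finset.mem_insert_of_mem hyC)

lemma disjG (X : Ctx E e) : ∀ a b : {f // f ∈ E}, a ≠ b →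
    ¬ onTreePath (pGraph (P X)) ⟨e, X.he⟩ b a →
    ¬ onTreePath (pGraph (P X)) ⟨e, X.he⟩ a b → a.1 ∩ b.1 = ∅ := by
  intro a b hne h1 h2
  by_contra hcon
  obtain ⟨v, hv⟩ := Finset.nonempty_iff_ne_empty.mpr hcon
  rw [Finset.mem_inter] at hv
  rw [TreeTool.onTreePath_iff (hTg X)] at h1 h2
  by_cases ha : a = eB X
  · subst ha; exact h1 (TreeTool.anc_root _ _ _)
  by_cases hb : b = eB X
  · subst hb; exact h2 (TreeTool.anc_root _ _ _)
  have hCc : IsComponent (E.erase e) (cmp X a) := cmp_isComp X ha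
  have haC : a.1 ∈ insert e (cmp X a) := Finset.mem_insert_of_mem (self_mem_cmp X ha)
  have hbC : b.1 ∈ insert e (cmp X a) := Finset.mem_insert_of_mem
    (mem_component_of_inter (mem_component_self (mem_erase_of_ne X ha)) (mem_erase_of_ne X hb)
      ⟨v, Finset.mem_inter.mpr hv⟩)
  by_cases hanc : TreeTool.anc (X.D (cmp X a) hCc).J.isTree ⟨e, Finset.mem_insert_self _ _⟩
      ⟨a.1, haC⟩ ⟨b.1, hbC⟩
  · exact h1 (ancUp X (depC X (cmp X a) hCc b.1 hbC) (cmp X a) hCc b a haC hbC le_rfl hanc)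
  by_cases hanc2 : TreeTool.anc (X.D (cmp X a) hCc).J.isTree ⟨e, Finset.mem_insert_self _ _⟩
      ⟨b.1, hbC⟩ ⟨a.1, haC⟩
  · exact h2 (ancUp X (depC X (cmp X a) hCc a.1 haC) (cmp X a) hCc a b hbC haC le_rfl hanc2)
  have hsne : (⟨a.1, haC⟩ : {f // f ∈ insert e (cmp X a)}) ≠ ⟨b.1, hbC⟩ := by
    intro h
    have h2 := congrArg Subtype.val h
    exact hne (Subtype.ext h2)
  have hdisj := (X.D (cmp X a) hCc).disj ⟨a.1, haC⟩ ⟨b.1, hbC⟩ hsne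
    (by rw [TreeTool.onTreePath_iff (X.D (cmp X a) hCc).J.isTree]; exact hanc)
    (by rw [TreeTool.onTreePath_iff (X.D (cmp X a) hCc).J.isTree]; exact hanc2)
  have hmem : v ∈ a.1 ∩ b.1 := Finset.mem_inter.mpr hv
  rw [hdisj] at hmem
  exact Finset.notMem_empty v hmem

/-- The backward direction: gluing DBDs of the components at the root `e`. -/
noncomputable def backward (X : Ctx E e) : DBD E e where
  J := { T := pGraph (P X), isTree := hTg X, conn := connG X }
  rootMem := X.he
  disj := disjG X

end Bwd

theorem stmt9' (E : Finset (Finset V)) (e : Finset V) (he : e ∈ E) :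
    DbRootable E e ↔
      ∀ C : Finset (Finset V), IsComponent (E.erase e) C → DbRootable (insert e C) e := by
  constructor
  · rintro ⟨D⟩ C hC
    exact ⟨Fwd.forward ⟨he, D, C, hC⟩⟩
  · intro h
    exact ⟨Bwd.backward ⟨he, fun C hC => (h C hC).some⟩⟩

/-- `H` is db-rootable in `e` iff for every connected component `C` of
`H \ e` the hypergraph obtained by adding `e` to `C` is db-rootable in `e`. -/
theorem stmt9 (E : Finset (Finset V)) (e : Finset V) (he : e ∈ E) :
    DbRootable E e ↔
      ∀ C : Finset (Finset V), IsComponent (E.erase e) C → DbRootable (insert e C) e := by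
  exact stmt9' E e he
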